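/- Every point y of the polytope Y can be written as a convex combination of 0-1 points of Y (equivalently, as a convex combination of indicator vectors of feasible threadings). -/

import Mathlib

open Finset

/-- The threading polytope `Y ⊆ ℝ^{m×n}`. -/
def threadingPolytope (m n : ℕ) : Set (Fin m → Fin n → ℝ) :=
  {y | (∀ i, ∑ j, y i j = 1) ∧
       (∀ (i : Fin m) (hi : (i : ℕ) + 1 < m) (j : Fin n), (j : ℕ) + 1 < n →
         ∑ l ∈ Finset.univ.filter (· ≤ j), y ⟨(i : ℕ) + 1, hi⟩ l ≤
           ∑ l ∈ Finset.univ.filter (· ≤ j), y i l) ∧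
       (∀ i j, 0 ≤ y i j)}

lemma sum_ite_filter_le {n : ℕ} (r j : Fin n) :
    ∑ l ∈ Finset.univ.filter (· ≤ j), (if l = r then (1:ℝ) else 0)
      = if r ≤ j then 1 else 0 := by
  rw [Finset.sum_ite_eq' (Finset.univ.filter (· ≤ j)) r (fun _ => (1:ℝ))]
  simp

lemma threading_aux (m n : ℕ) : ∀ (N : ℕ) (y : Fin m → Fin n → ℝ),
    ((Finset.univ : Finset (Fin m × Fin n)).filter (fun p => y p.1 p.2 ≠ 0)).card ≤ N →
    y ∈ threadingPolytope m n →
    y ∈ convexHull ℝ {y ∈ threadingPolytope m n | ∀ i j, y i j = 0 ∨ y i j = 1} := by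
  intro N
  induction N with
  | zero =>
    intro y hcard hy
    by_cases h01 : ∀ i j, y i j = 0 ∨ y i j = 1
    · exact subset_convexHull ℝ _ ⟨hy, h01⟩
    · push_neg at h01
      obtain ⟨i0, j0, h0, h1⟩ := h01
      exfalso
      have hm : (i0, j0) ∈ (Finset.univ : Finset (Fin m × Fin n)).filter
          (fun p => y p.1 p.2 ≠ 0) := by simp [h0]
      have := Finset.card_pos.mpr ⟨_, hm⟩
      omega
  | succ N ih =>
    intro y hcard hy
    by_cases h01 : ∀ i j, y i j = 0 ∨ y i j = 1
    · exact subset_convexHull ℝ _ ⟨hy, h01⟩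
    push_neg at h01
    obtain ⟨i0, j0, hy0, hy1⟩ := h01
    obtain ⟨hsum, hchain, hpos⟩ := hy
    have hrowne : ∀ i : Fin m, (Finset.univ.filter (fun j => y i j ≠ 0)).Nonempty := by
      intro i
      by_contra h
      rw [Finset.not_nonempty_iff_eq_empty, Finset.filter_eq_empty_iff] at h
      have hz : ∑ j, y i j = 0 := Finset.sum_eq_zero (fun j hj => by
        have := h hj; simpa using this)
      rw [hsum i] at hz
      norm_num at hz
    set r : Fin m → Fin n := fun i => (Finset.univ.filter (fun j => y i j ≠ 0)).min' (hrowne i)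
      with hr
    have hrne : ∀ i, y i (r i) ≠ 0 := fun i => by
      have := Finset.min'_mem _ (hrowne i)
      simpa [hr] using this
    have hrpos : ∀ i, 0 < y i (r i) := fun i => lt_of_le_of_ne (hpos i (r i)) (Ne.symm (hrne i))
    have hrlt : ∀ i (j : Fin n), j < r i → y i j = 0 := by
      intro i j hj
      by_contra h
      have : r i ≤ j := Finset.min'_le _ _ (by simpa using h)
      exact absurd hj (not_lt.mpr this)
    have hSzero : ∀ i (j : Fin n), j < r i → ∑ l ∈ Finset.univ.filter (· ≤ j), y i l = 0 := by
      intro i j hj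
      refine Finset.sum_eq_zero fun l hl => hrlt i l (lt_of_le_of_lt ?_ hj)
      simpa using hl
    have hSge : ∀ i (j : Fin n), r i ≤ j → y i (r i) ≤ ∑ l ∈ Finset.univ.filter (· ≤ j), y i l := by
      intro i j hj
      exact Finset.single_le_sum (f := fun l => y i l) (fun l _ => hpos i l) (by simpa using hj)
    have hrmono : ∀ (i : Fin m) (hi : (i:ℕ)+1 < m), r i ≤ r ⟨(i:ℕ)+1, hi⟩ := by
      intro i hi
      by_contra h
      push_neg at h
      set i' : Fin m := ⟨(i:ℕ)+1, hi⟩ with hi'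
      have hjlt : ((r i' : ℕ)) + 1 < n := by
        have h1 : (r i' : ℕ) + 1 ≤ (r i : ℕ) := h
        have := (r i).isLt
        omega
      have hc := hchain i hi (r i') hjlt
      have hz : ∑ l ∈ Finset.univ.filter (· ≤ r i'), y i l = 0 := hSzero i (r i') h
      have hge := hSge i' (r i') le_rfl
      have := hrpos i'
      rw [hz] at hc
      linarith
    have hmne : (Finset.univ : Finset (Fin m)).Nonempty := ⟨i0, Finset.mem_univ _⟩
    set lam : ℝ := Finset.univ.inf' hmne (fun i => y i (r i)) with hlam
    have hlamle : ∀ i, lam ≤ y i (r i) := fun i => Finset.inf'_le _ (Finset.mem_univ i)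
    obtain ⟨istar, -, hstar⟩ := Finset.exists_mem_eq_inf' hmne (fun i => y i (r i))
    have hstar' : lam = y istar (r istar) := by rw [hlam, hstar]
    have hlampos : 0 < lam := by rw [hstar']; exact hrpos istar
    have hlamlt : lam < 1 := by
      by_contra h
      push_neg at h
      have hone : ∀ i, y i (r i) = 1 := by
        intro i
        have h1 : y i (r i) ≤ 1 := by
          have := Finset.single_le_sum (f := y i) (fun j _ => hpos i j) (Finset.mem_univ (r i))
          rw [hsum i] at this
          exact this
        have := hlamle i
        linarith
      have hzero : ∀ i j, j ≠ r i → y i j = 0 := by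
        intro i j hj
        have hsum' : ∑ l ∈ Finset.univ.erase (r i), y i l = 0 := by
          have h2 := Finset.add_sum_erase Finset.univ (y i) (Finset.mem_univ (r i))
          rw [hsum i, hone i] at h2
          linarith
        exact (Finset.sum_eq_zero_iff_of_nonneg (fun l _ => hpos i l)).mp hsum' j (by simp [hj])
      by_cases hj : j0 = r i0
      · exact hy1 (hj ▸ hone i0)
      · exact hy0 (hzero i0 j0 hj)
    have h1l : (0:ℝ) < 1 - lam := by linarith
    set v : Fin m → Fin n → ℝ := fun i j => if j = r i then 1 else 0 with hv
    set y' : Fin m → Fin n → ℝ := fun i j => (y i j - lam * v i j) / (1 - lam) with hy'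
    have hvrow : ∀ i, ∑ j, v i j = 1 := by
      intro i
      simp [hv]
    have hvS : v ∈ {y ∈ threadingPolytope m n | ∀ i j, y i j = 0 ∨ y i j = 1} := by
      refine ⟨⟨hvrow, ?_, ?_⟩, ?_⟩
      · intro i hi j hj
        have h1 := sum_ite_filter_le (r i) j
        have h2 := sum_ite_filter_le (r ⟨(i:ℕ)+1, hi⟩) j
        simp only [hv]
        rw [h1, h2]
        have hm := hrmono i hi
        split_ifs with ha hb <;> try norm_num
        exact absurd (le_trans hm ha) hb
      · intro i j
        simp only [hv]
        split_ifs <;> norm_num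
      · intro i j
        simp only [hv]
        split_ifs <;> simp
    have hy'P : y' ∈ threadingPolytope m n := by
      refine ⟨?_, ?_, ?_⟩
      · intro i
        simp only [hy']
        rw [← Finset.sum_div, Finset.sum_sub_distrib, ← Finset.mul_sum, hsum i, hvrow i]
        field_simp
      · intro i hi j hj
        simp only [hy']
        rw [← Finset.sum_div, ← Finset.sum_div]
        apply div_le_div_of_nonneg_right ?_ h1l.le
        rw [Finset.sum_sub_distrib, Finset.sum_sub_distrib]
        have h1 : ∑ l ∈ Finset.univ.filter (· ≤ j), lam * v i l
            = lam * (if r i ≤ j then 1 else 0) := by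
          rw [← Finset.mul_sum]
          simp only [hv]
          rw [sum_ite_filter_le]
        have h2 : ∑ l ∈ Finset.univ.filter (· ≤ j), lam * v ⟨(i:ℕ)+1, hi⟩ l
            = lam * (if r ⟨(i:ℕ)+1, hi⟩ ≤ j then 1 else 0) := by
          rw [← Finset.mul_sum]
          simp only [hv]
          rw [sum_ite_filter_le]
        rw [h1, h2]
        have hc := hchain i hi j hj
        have hm := hrmono i hi
        by_cases hri : r i ≤ j
        · by_cases hri' : r ⟨(i:ℕ)+1, hi⟩ ≤ j
          · simp only [if_pos hri, if_pos hri']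
            linarith
          · simp only [if_pos hri, if_neg hri']
            have hz : ∑ l ∈ Finset.univ.filter (· ≤ j), y ⟨(i:ℕ)+1, hi⟩ l = 0 :=
              hSzero _ j (not_le.mp hri')
            have hge := hSge i j hri
            have := hlamle i
            rw [hz]
            linarith
        · have hri' : ¬ r ⟨(i:ℕ)+1, hi⟩ ≤ j := fun hcon => hri (le_trans hm hcon)
          simp only [if_neg hri, if_neg hri']
          linarith
      · intro i j
        simp only [hy']
        apply div_nonneg _ h1l.le
        by_cases hj : j = r i
        · subst hj
          simp only [hv, if_pos rfl]
          have := hlamle i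
          linarith
        · simp only [hv, if_neg hj]
          have := hpos i j
          linarith
    have hsubset : (Finset.univ : Finset (Fin m × Fin n)).filter (fun p => y' p.1 p.2 ≠ 0) ⊆
        (Finset.univ : Finset (Fin m × Fin n)).filter (fun p => y p.1 p.2 ≠ 0) := by
      intro p hp
      simp only [Finset.mem_filter, Finset.mem_univ, true_and] at hp ⊢
      by_cases hj : p.2 = r p.1
      · rw [hj]; exact hrne p.1
      · intro h
        apply hp
        simp only [hy', hv, if_neg hj, h]
        ring
    have hmem : ((istar, r istar) : Fin m × Fin n) ∈
        (Finset.univ : Finset (Fin m × Fin n)).filter (fun p => y p.1 p.2 ≠ 0) := by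
      simp [hrne istar]
    have hnmem : ((istar, r istar) : Fin m × Fin n) ∉
        (Finset.univ : Finset (Fin m × Fin n)).filter (fun p => y' p.1 p.2 ≠ 0) := by
      simp only [Finset.mem_filter, Finset.mem_univ, true_and, ne_eq, not_not]
      simp only [hy', hv, if_pos rfl, ← hstar']
      simp
    have hlt : ((Finset.univ : Finset (Fin m × Fin n)).filter (fun p => y' p.1 p.2 ≠ 0)).card <
        ((Finset.univ : Finset (Fin m × Fin n)).filter (fun p => y p.1 p.2 ≠ 0)).card :=
      Finset.card_lt_card ((Finset.ssubset_iff_of_subset hsubset).mpr ⟨_, hmem, hnmem⟩)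
    have hy'hull := ih y' (by omega) hy'P
    have hvhull := subset_convexHull ℝ _ hvS
    have key : y = lam • v + (1 - lam) • y' := by
      funext i j
      simp only [Pi.add_apply, Pi.smul_apply, smul_eq_mul, hy']
      field_simp
      ring
    rw [key]
    exact (convex_convexHull ℝ _) hvhull hy'hull hlampos.le (by linarith) (by ring)

theorem threadingPolytope_subset_convexHull_zero_one (m n : ℕ) :
    threadingPolytope m n ⊆
      convexHull ℝ {y ∈ threadingPolytope m n | ∀ i j, y i j = 0 ∨ y i j = 1} := by
  intro y hy
  exact threading_aux m n _ y le_rfl hy
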